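/- Let K be an imaginary quadratic field and L a Hermitian O_K-lattice of rank m in (V, h). For a K-subspace F of V with orthogonal projection p onto F^⊥, the discriminants satisfy d_L = d_{F ∩ L} · d_{p(L)}. -/

import Mathlib

open Matrix Complex
open scoped ComplexOrder

private lemma aux_quad (K : Subfield ℂ) (hdeg : Module.finrank ℚ K = 2) {z : ℂ} (hz : z ∈ K) :
    ∃ a b c : ℚ, ¬(a = 0 ∧ b = 0 ∧ c = 0) ∧ (a : ℂ) * z ^ 2 + (b : ℂ) * z + (c : ℂ) = 0 := by
  haveI : FiniteDimensional ℚ K := FiniteDimensional.of_finrank_eq_succ (n := 1) hdeg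
  set Z : K := ⟨z, hz⟩ with hZ
  have hnind : ¬ LinearIndependent ℚ ![Z ^ 2, Z, 1] := by
    intro hind
    have := hind.fintype_card_le_finrank
    simp [hdeg] at this
  obtain ⟨g, hsum, i0, hi0⟩ := Fintype.not_linearIndependent_iff.mp hnind
  refine ⟨g 0, g 1, g 2, ?_, ?_⟩
  · rintro ⟨h0, h1, h2⟩
    fin_cases i0 <;> simp_all
  · have := congrArg (K.subtype) hsum
    simp only [Fin.sum_univ_three, map_add] at this
    have e : ∀ (q : ℚ) (u : K), K.subtype (q • u) = (q : ℂ) * (u : ℂ) := by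
      intro q u
      rw [Rat.smul_def]
      simp [_root_.map_mul]
    rw [e, e, e] at this
    simpa [hZ, mul_one] using this

private lemma aux_conj_mem (K : Subfield ℂ) (hdeg : Module.finrank ℚ K = 2) {z : ℂ}
    (hz : z ∈ K) : (starRingEnd ℂ) z ∈ K := by
  obtain ⟨a, b, c, hne, hrel⟩ := aux_quad K hdeg hz
  have hrelc : (a : ℂ) * ((starRingEnd ℂ) z) ^ 2 + (b : ℂ) * ((starRingEnd ℂ) z) + (c : ℂ) = 0 := by
    have := congrArg (starRingEnd ℂ) hrel
    simpa [map_add, _root_.map_mul, map_pow, map_ratCast] using this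
  by_cases ha : a = 0
  · by_cases hb : b = 0
    · exfalso
      apply hne
      subst ha hb
      simp only [Rat.cast_zero, zero_mul, zero_add] at hrel
      exact ⟨rfl, rfl, by exact_mod_cast hrel⟩
    · have hb' : (b : ℂ) ≠ 0 := by exact_mod_cast hb
      have hz' : z = -((c : ℂ) / (b : ℂ)) := by
        subst ha
        simp only [Rat.cast_zero, zero_mul, zero_add] at hrel
        field_simp
        linear_combination hrel
      have : (starRingEnd ℂ) z = z := by
        rw [hz']
        simp [map_ratCast, ← Complex.ofReal_ratCast]
      rw [this]; exact hz
  · have ha' : (a : ℂ) ≠ 0 := by exact_mod_cast ha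
    have key : ((starRingEnd ℂ) z - z) * ((a : ℂ) * ((starRingEnd ℂ) z + z) + (b : ℂ)) = 0 := by
      linear_combination hrelc - hrel
    rcases mul_eq_zero.mp key with h1 | h2
    · rw [sub_eq_zero.mp h1]; exact hz
    · have : (starRingEnd ℂ) z = -((b : ℂ) / (a : ℂ)) - z := by
        field_simp
        linear_combination h2
      rw [this]
      exact sub_mem (neg_mem (div_mem (SubfieldClass.ratCast_mem K b) (SubfieldClass.ratCast_mem K a))) hz

private lemma aux_real_rat (K : Subfield ℂ) (hdeg : Module.finrank ℚ K = 2)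
    (himag : ¬ (K : Set ℂ) ⊆ Set.range (Complex.ofReal)) {z : ℂ} (hz : z ∈ K)
    (hzim : z.im = 0) : ∃ q : ℚ, (q : ℂ) = z := by
  by_contra hq
  push_neg at hq
  haveI : FiniteDimensional ℚ K := FiniteDimensional.of_finrank_eq_succ (n := 1) hdeg
  obtain ⟨w, hwK, hw⟩ : ∃ w ∈ K, w ∉ Set.range Complex.ofReal := by
    by_contra hcon
    push_neg at hcon
    exact himag fun u hu => hcon u hu
  have hwim : w.im ≠ 0 := by
    intro h0
    exact hw ⟨w.re, Complex.ext rfl (by simp [h0])⟩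
  set Z : K := ⟨z, hz⟩ with hZ
  have hind : LinearIndependent ℚ ![Z, 1] := by
    rw [linearIndependent_fin2]
    refine ⟨one_ne_zero, fun q hqe => ?_⟩
    apply hq q
    have := congrArg K.subtype hqe
    rw [Rat.smul_def] at this
    simpa using this
  have hcard : Fintype.card (Fin 2) = Module.finrank ℚ K := by simp [hdeg]
  set bas := basisOfLinearIndependentOfCardEqFinrank hind hcard with hbas
  set W : K := ⟨w, hwK⟩ with hW
  have hrepr := bas.sum_repr W
  rw [show ⇑bas = ![Z, 1] from coe_basisOfLinearIndependentOfCardEqFinrank hind hcard] at hrepr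
  have := congrArg K.subtype hrepr
  simp only [Fin.sum_univ_two, map_add] at this
  rw [Rat.smul_def, Rat.smul_def, _root_.map_mul, _root_.map_mul] at this
  have him := congrArg Complex.im this
  simp only [Matrix.cons_val_zero, Matrix.cons_val_one, Matrix.head_cons] at him
  have : ((bas.repr W 0 : ℚ) : ℂ) * z + ((bas.repr W 1 : ℚ) : ℂ) = w := by
    simpa using this
  have him2 := congrArg Complex.im this
  simp [Complex.add_im, Complex.mul_im, hzim] at him2
  exact hwim him2.symm

private lemma aux_denom (K : Subfield ℂ) (hdeg : Module.finrank ℚ K = 2) {z : ℂ}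
    (hz : z ∈ K) : ∃ m : ℤ, m ≠ 0 ∧ IsIntegral ℤ ((m : ℂ) * z) := by
  obtain ⟨a, b, c, hne, hrel⟩ := aux_quad K hdeg hz
  have halg : IsAlgebraic ℚ z := by
    refine ⟨Polynomial.C a * Polynomial.X ^ 2 + Polynomial.C b * Polynomial.X + Polynomial.C c,
      ?_, ?_⟩
    · intro h0
      apply hne
      have h2 := congrArg (Polynomial.coeff · 2) h0
      have h1 := congrArg (Polynomial.coeff · 1) h0
      have hc0 := congrArg (Polynomial.coeff · 0) h0
      simp [Polynomial.coeff_add, Polynomial.coeff_C_mul, Polynomial.coeff_X_pow,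
        Polynomial.coeff_X, Polynomial.coeff_C] at h2 h1 hc0
      exact ⟨h2, h1, hc0⟩
    · simp only [map_add, _root_.map_mul, Polynomial.aeval_C, Polynomial.aeval_X_pow,
        Polynomial.aeval_X, map_pow]
      have hcast : ∀ q : ℚ, algebraMap ℚ ℂ q = (q : ℂ) := fun q => by
        simp [Algebra.algebraMap_eq_smul_one, Rat.smul_def]
      rw [hcast, hcast, hcast]
      exact hrel
  have halg' : IsAlgebraic ℤ z := (IsFractionRing.isAlgebraic_iff ℤ ℚ ℂ).mpr halg
  obtain ⟨yy, hy0, hint⟩ := halg'.exists_integral_multiple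
  refine ⟨yy, hy0, ?_⟩
  rw [← zsmul_eq_mul]
  exact hint

/-- A rational number whose complex cast is integral over ℤ, and is the norm of something,
behaves like an integer. -/
private lemma aux_rat_int {q : ℚ} (hint : IsIntegral ℤ (q : ℂ)) : ∃ m : ℤ, (m : ℚ) = q := by
  have h1 : IsIntegral ℤ q := by
    have : algebraMap ℚ ℂ q = (q : ℂ) := by
      simp [Algebra.algebraMap_eq_smul_one, Rat.smul_def]
    rw [← this] at hint
    exact (isIntegral_algebraMap_iff (algebraMap ℚ ℂ).injective).mp hint
  exact IsIntegrallyClosed.isIntegral_iff.mp h1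

/-- If `u` is a unit in the ring of integers of the imaginary quadratic field `K`, then
`|u|² = 1`. -/
private lemma aux_unit (K : Subfield ℂ) (hdeg : Module.finrank ℚ K = 2)
    (himag : ¬ (K : Set ℂ) ⊆ Set.range (Complex.ofReal))
    {u v : ℂ} (huK : u ∈ K) (hui : IsIntegral ℤ u) (hvK : v ∈ K) (hvi : IsIntegral ℤ v)
    (huv : u * v = 1) : star u * u = 1 := by
  have hconj_int : ∀ w : ℂ, IsIntegral ℤ w → IsIntegral ℤ ((starRingEnd ℂ) w) := by
    intro w hw
    have := hw.map (f := ((starRingEnd ℂ).toIntAlgHom : ℂ →ₐ[ℤ] ℂ))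
    exact this
  -- α = u * conj u is a nonneg rational integer
  have key : ∀ w : ℂ, w ∈ K → IsIntegral ℤ w → ∃ m : ℤ, ((m : ℂ)) = w * (starRingEnd ℂ) w ∧ (0:ℝ) ≤ (m:ℝ) := by
    intro w hwK hwi
    have hmem : w * (starRingEnd ℂ) w ∈ K := mul_mem hwK (aux_conj_mem K hdeg hwK)
    have hre : w * (starRingEnd ℂ) w = ((Complex.normSq w : ℝ) : ℂ) := by
      rw [Complex.mul_conj]
    have him : (w * (starRingEnd ℂ) w).im = 0 := by rw [hre]; simp
    obtain ⟨q, hq⟩ := aux_real_rat K hdeg himag hmem him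
    have hqi : IsIntegral ℤ ((q : ℂ)) := by
      rw [hq]; exact hwi.mul (hconj_int w hwi)
    obtain ⟨m, hm⟩ := aux_rat_int hqi
    refine ⟨m, ?_, ?_⟩
    · rw [← hq]; exact_mod_cast congrArg (fun t : ℚ => (t : ℂ)) hm
    · have : ((m : ℂ)) = ((Complex.normSq w : ℝ) : ℂ) := by
        rw [← hre, ← hq]; exact_mod_cast congrArg (fun t : ℚ => (t : ℂ)) hm
      have : (m : ℝ) = Complex.normSq w := by exact_mod_cast this
      rw [this]; exact Complex.normSq_nonneg w
  obtain ⟨m, hm, hm0⟩ := key u huK hui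
  obtain ⟨m', hm', hm'0⟩ := key v hvK hvi
  have hmm' : (m : ℂ) * (m' : ℂ) = 1 := by
    rw [hm, hm']
    have : u * (starRingEnd ℂ) u * (v * (starRingEnd ℂ) v)
        = (u * v) * (starRingEnd ℂ) (u * v) := by
      rw [_root_.map_mul]; ring
    rw [this, huv]
    simp
  have hmm'' : m * m' = 1 := by exact_mod_cast hmm'
  have hm1 : m = 1 := by
    rcases Int.isUnit_iff.mp (IsUnit.of_mul_eq_one m' hmm'') with h1 | h1
    · exact h1
    · exfalso; rw [h1] at hm0; norm_num at hm0
  rw [hm1] at hm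
  show (starRingEnd ℂ) u * u = 1
  rw [mul_comm, ← hm]
  norm_num

private lemma aux_herm {n : ℕ} {h : Matrix (Fin n) (Fin n) ℂ} (hh : h.IsHermitian)
    (a b : Fin n → ℂ) :
    star (star a ⬝ᵥ h.mulVec b) = star b ⬝ᵥ h.mulVec a := by
  rw [Matrix.star_dotProduct, star_star, Matrix.star_mulVec, hh.eq,
    Matrix.dotProduct_mulVec]

private lemma aux_e1 {n : ℕ} {κ : Type*} [Fintype κ] (c : κ → ℂ) (v : κ → Fin n → ℂ)
    (u : Fin n → ℂ) :
    star (∑ k, c k • v k) ⬝ᵥ u = ∑ k, star (c k) * (star (v k) ⬝ᵥ u) := by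
  simp only [dotProduct, Pi.star_apply, Finset.sum_apply, Pi.smul_apply, smul_eq_mul,
    star_sum, star_mul', Finset.sum_mul, Finset.mul_sum]
  rw [Finset.sum_comm]
  exact Finset.sum_congr rfl fun k _ => Finset.sum_congr rfl fun a _ => by ring

private lemma aux_e2 {n : ℕ} {κ : Type*} [Fintype κ] (h : Matrix (Fin n) (Fin n) ℂ)
    (d : κ → ℂ) (w : κ → Fin n → ℂ) (u : Fin n → ℂ) :
    u ⬝ᵥ h.mulVec (∑ l, d l • w l) = ∑ l, d l * (u ⬝ᵥ h.mulVec (w l)) := by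
  rw [← Matrix.mulVecLin_apply, map_sum]
  simp only [_root_.map_smul, Matrix.mulVecLin_apply]
  simp only [dotProduct, Finset.sum_apply, Pi.smul_apply, smul_eq_mul, Finset.mul_sum]
  rw [Finset.sum_comm]
  exact Finset.sum_congr rfl fun k _ => Finset.sum_congr rfl fun a _ => by ring

private lemma aux_gram {n : ℕ} (h : Matrix (Fin n) (Fin n) ℂ) {ι κ : Type*}
    [Fintype ι] [Fintype κ] [DecidableEq ι] [DecidableEq κ]
    (M : Matrix ι κ ℂ) (B : κ → Fin n → ℂ) (z : ι → Fin n → ℂ)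
    (hz : ∀ i, z i = ∑ k, M i k • B k) :
    (Matrix.of fun i j => star (z i) ⬝ᵥ h.mulVec (z j))
      = M.map star * (Matrix.of fun k l => star (B k) ⬝ᵥ h.mulVec (B l)) * Mᵀ := by
  ext i j
  simp only [Matrix.mul_apply, Matrix.map_apply, Matrix.transpose_apply, Matrix.of_apply]
  calc star (z i) ⬝ᵥ h.mulVec (z j)
      = ∑ k, star (M i k) * (star (B k) ⬝ᵥ h.mulVec (z j)) := by
        rw [hz i]; exact aux_e1 _ _ _
    _ = ∑ k, star (M i k) * ∑ l, M j l * (star (B k) ⬝ᵥ h.mulVec (B l)) := by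
        refine Finset.sum_congr rfl fun k _ => ?_
        rw [hz j, aux_e2]
    _ = ∑ l, (∑ k, star (M i k) * (star (B k) ⬝ᵥ h.mulVec (B l))) * M j l := by
        simp only [Finset.mul_sum, Finset.sum_mul]
        rw [Finset.sum_comm]
        exact Finset.sum_congr rfl fun k _ => Finset.sum_congr rfl fun l _ => by ring

private lemma aux_det_mem (S : Subring ℂ) {ι : Type*} [Fintype ι] [DecidableEq ι]
    (A : Matrix ι ι ℂ) (hA : ∀ i j, A i j ∈ S) : A.det ∈ S := by
  have : A = (Matrix.of fun i j => (⟨A i j, hA i j⟩ : S)).map S.subtype := by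
    ext i j; rfl
  rw [this, ← RingHom.mapMatrix_apply, ← RingHom.map_det]
  exact SetLike.coe_mem _

theorem stmt13 (K : Subfield ℂ)
    (hdeg : Module.finrank ℚ K = 2)
    (himag : ¬ (K : Set ℂ) ⊆ Set.range (Complex.ofReal))
    (O : Set ℂ) (hO : O = {z : ℂ | z ∈ K ∧ IsIntegral ℤ z})
    (n : ℕ) (h : Matrix (Fin n) (Fin n) ℂ) (hhK : ∀ i j, h i j ∈ K) (hh : h.PosDef)
    (B : Fin n → (Fin n → ℂ)) (hBK : ∀ i j, B i j ∈ K) (hB : LinearIndependent ℂ B)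
    (L : Set (Fin n → ℂ))
    (hL : L = {v | ∃ c : Fin n → ℂ, (∀ i, c i ∈ O) ∧ v = ∑ i, c i • B i})
    (F : Submodule ℂ (Fin n → ℂ))
    (hFK : F = Submodule.span ℂ ((F : Set (Fin n → ℂ)) ∩ {v | ∀ i, v i ∈ K}))
    (p : (Fin n → ℂ) →ₗ[ℂ] (Fin n → ℂ))
    (hp1 : ∀ v, v - p v ∈ F)
    (hp2 : ∀ v, ∀ u ∈ F, star u ⬝ᵥ h.mulVec (p v) = 0)
    (r s : ℕ)
    (x : Fin r → (Fin n → ℂ))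
    (hxmem : ∀ t, x t ∈ L ∧ x t ∈ F)
    (hxind : LinearIndependent ℂ x)
    (hxspan : ∀ v ∈ L, v ∈ F →
      ∃ c : Fin r → ℂ, (∀ t, c t ∈ O) ∧ v = ∑ t, c t • x t)
    (y : Fin s → (Fin n → ℂ))
    (hymem : ∀ t, ∃ w ∈ L, y t = p w)
    (hyind : LinearIndependent ℂ y)
    (hyspan : ∀ w ∈ L,
      ∃ c : Fin s → ℂ, (∀ t, c t ∈ O) ∧ p w = ∑ t, c t • y t) :
    ((Matrix.of fun i j => star (B i) ⬝ᵥ h.mulVec (B j)).det).re =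
      ((Matrix.of fun i j => star (x i) ⬝ᵥ h.mulVec (x j)).det).re *
        ((Matrix.of fun i j => star (y i) ⬝ᵥ h.mulVec (y j)).det).re := by
  classical
  have hherm : h.IsHermitian := hh.1
  -- `O` as a subring of ℂ
  have hO' : ∀ z : ℂ, z ∈ O ↔ (z ∈ K ∧ IsIntegral ℤ z) := by
    rw [hO]; exact fun z => Iff.rfl
  let Or : Subring ℂ :=
    { carrier := O
      one_mem' := (hO' 1).mpr ⟨one_mem K, isIntegral_one⟩
      zero_mem' := (hO' 0).mpr ⟨zero_mem K, isIntegral_zero⟩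
      add_mem' := fun ha hb => by
        obtain ⟨haK, hai⟩ := (hO' _).mp ha
        obtain ⟨hbK, hbi⟩ := (hO' _).mp hb
        exact (hO' _).mpr ⟨add_mem haK hbK, hai.add hbi⟩
      neg_mem' := fun ha => by
        obtain ⟨haK, hai⟩ := (hO' _).mp ha
        exact (hO' _).mpr ⟨neg_mem haK, hai.neg⟩
      mul_mem' := fun ha hb => by
        obtain ⟨haK, hai⟩ := (hO' _).mp ha
        obtain ⟨hbK, hbi⟩ := (hO' _).mp hb
        exact (hO' _).mpr ⟨mul_mem haK hbK, hai.mul hbi⟩ }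
  have hOr : ∀ z : ℂ, z ∈ O ↔ z ∈ Or := fun z => Iff.rfl
  have hLmem : ∀ v ∈ L, ∃ c : Fin n → ℂ, (∀ i, c i ∈ O) ∧ v = ∑ i, c i • B i := by
    rw [hL]; exact fun v hv => hv
  have hBL : ∀ k, B k ∈ L := by
    intro k
    rw [hL]
    refine ⟨fun i => if i = k then 1 else 0, fun i => ?_, ?_⟩
    · by_cases hik : i = k
      · simpa [hik, hOr] using Subring.one_mem Or
      · simpa [hik, hOr] using Subring.zero_mem Or
    · simp [ite_smul]
  -- L is closed under O-linear combinations
  have hLcomb : ∀ {m : ℕ} (c : Fin m → ℂ) (u : Fin m → Fin n → ℂ),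
      (∀ t, c t ∈ O) → (∀ t, u t ∈ L) → ∑ t, c t • u t ∈ L := by
    intro m c u hc hu
    choose d hdO hdu using fun t => hLmem (u t) (hu t)
    rw [hL]
    refine ⟨fun i => ∑ t, c t * d t i, fun i => ?_, ?_⟩
    · rw [hOr]
      exact Subring.sum_mem Or fun t _ =>
        Subring.mul_mem Or ((hOr _).mp (hc t)) ((hOr _).mp (hdO t i))
    · calc ∑ t, c t • u t = ∑ t, ∑ i, (c t * d t i) • B i := by
            refine Finset.sum_congr rfl fun t _ => ?_
            rw [hdu t, Finset.smul_sum]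
            exact Finset.sum_congr rfl fun i _ => smul_smul _ _ _
      _ = ∑ i, (∑ t, c t * d t i) • B i := by
            rw [Finset.sum_comm]
            exact Finset.sum_congr rfl fun i _ => (Finset.sum_smul).symm
  have hLsub : ∀ v ∈ L, ∀ u ∈ L, v - u ∈ L := by
    intro v hv u hu
    obtain ⟨a, haO, hav⟩ := hLmem v hv
    obtain ⟨b, hbO, hbu⟩ := hLmem u hu
    rw [hL]
    refine ⟨fun i => a i - b i, fun i => ?_, ?_⟩
    · rw [hOr]; exact Subring.sub_mem Or ((hOr _).mp (haO i)) ((hOr _).mp (hbO i))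
    · rw [hav, hbu, ← Finset.sum_sub_distrib]
      exact Finset.sum_congr rfl fun i _ => (sub_smul _ _ _).symm
  -- p vanishes on F
  have hpF : ∀ v ∈ F, p v = 0 := by
    intro v hv
    have hpv : p v ∈ F := by
      have h1 := hp1 v
      have h2 : p v = v - (v - p v) := (sub_sub_cancel v (p v)).symm
      rw [h2]; exact sub_mem hv h1
    have h0 := hp2 v (p v) hpv
    by_contra hne
    have := hh.dotProduct_mulVec_pos hne
    rw [h0] at this
    exact lt_irrefl 0 this
  have hxF : ∀ t, x t ∈ F := fun t => (hxmem t).2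
  have hxL : ∀ t, x t ∈ L := fun t => (hxmem t).1
  have hpx : ∀ t, p (x t) = 0 := fun t => hpF (x t) (hxF t)
  -- coordinates with respect to B of K-rational vectors lie in K
  have hcoordK : ∀ v : Fin n → ℂ, (∀ i, v i ∈ K) →
      ∃ c : Fin n → ℂ, (∀ i, c i ∈ K) ∧ v = ∑ i, c i • B i := by
    intro v hvK
    set Bk : Matrix (Fin n) (Fin n) K := Matrix.of fun i j => (⟨B i j, hBK i j⟩ : K) with hBk
    have hBkmap : Bk.map K.subtype = Matrix.of B := by ext i j; rfl
    have hBunit : IsUnit (Matrix.of B : Matrix (Fin n) (Fin n) ℂ) := by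
      rw [← Matrix.linearIndependent_rows_iff_isUnit]
      exact hB
    have hdetne : Bk.det ≠ 0 := by
      intro h0
      have : (Matrix.of B : Matrix (Fin n) (Fin n) ℂ).det = 0 := by
        rw [← hBkmap, ← RingHom.mapMatrix_apply, ← RingHom.map_det, h0, map_zero]
      exact (Matrix.isUnit_iff_isUnit_det _).mp hBunit |>.ne_zero this
    have hBkunit : IsUnit Bk.det := isUnit_iff_ne_zero.mpr hdetne
    set vk : Fin n → K := fun j => (⟨v j, hvK j⟩ : K) with hvk
    set ck : Fin n → K := Matrix.vecMul vk Bk⁻¹ with hck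
    have hckB : Matrix.vecMul ck Bk = vk := by
      rw [hck, Matrix.vecMul_vecMul, Matrix.nonsing_inv_mul Bk hBkunit, Matrix.vecMul_one]
    refine ⟨fun i => (ck i : ℂ), fun i => (ck i).2, ?_⟩
    funext j
    have := congrArg (fun u => (K.subtype (u j))) hckB
    simp only [Matrix.vecMul, dotProduct, map_sum, _root_.map_mul] at this
    rw [Finset.sum_apply]
    simpa [hvk, Pi.smul_apply, smul_eq_mul, hBk] using this.symm
  -- F is spanned by x
  have hFspan : F = Submodule.span ℂ (Set.range x) := by
    apply le_antisymm
    · nth_rewrite 1 [hFK]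
      apply Submodule.span_le.mpr
      rintro v ⟨hvF, hvK⟩
      obtain ⟨c, hcK, hcv⟩ := hcoordK v hvK
      choose m hm0 hmint using fun i => aux_denom K hdeg (hcK i)
      set N : ℤ := ∏ i, m i with hN
      have hNne : (N : ℂ) ≠ 0 := by
        rw [hN]
        push_cast
        exact Finset.prod_ne_zero_iff.mpr fun i _ => by exact_mod_cast hm0 i
      have hNL : (N : ℂ) • v ∈ L := by
        have : (N : ℂ) • v = ∑ i, ((N : ℂ) * c i) • B i := by
          rw [hcv, Finset.smul_sum]
          exact Finset.sum_congr rfl fun i _ => smul_smul _ _ _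
        rw [hL, this]
        refine ⟨fun i => (N : ℂ) * c i, fun i => ?_, by
          exact Finset.sum_congr rfl fun i _ => rfl⟩
        rw [hO]
        constructor
        · exact mul_mem (intCast_mem K N) (hcK i)
        · have h3 : ((∏ j ∈ Finset.univ.erase i, m j) * m i : ℤ) = N := by
            rw [hN]; exact Finset.prod_erase_mul _ _ (Finset.mem_univ i)
          have h2 : ((∏ j ∈ Finset.univ.erase i, m j : ℤ) : ℂ) * (((m i : ℤ) : ℂ) * c i)
              = (N : ℂ) * c i := by
            rw [← h3]; push_cast; ring
          show IsIntegral ℤ ((N : ℂ) * c i)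
          rw [← h2]
          have hint1 : IsIntegral ℤ ((∏ j ∈ Finset.univ.erase i, m j : ℤ) : ℂ) :=
            isIntegral_algebraMap (R := ℤ) (A := ℂ) (x := ∏ j ∈ Finset.univ.erase i, m j)
          exact hint1.mul (hmint i)
      have hNF : (N : ℂ) • v ∈ F := F.smul_mem _ hvF
      obtain ⟨cc, hccO, hccv⟩ := hxspan _ hNL hNF
      have hNspan : (N : ℂ) • v ∈ Submodule.span ℂ (Set.range x) := by
        rw [hccv]
        exact Submodule.sum_mem _ fun t _ =>
          Submodule.smul_mem _ _ (Submodule.subset_span ⟨t, rfl⟩)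
      have : v = (N : ℂ)⁻¹ • ((N : ℂ) • v) := by rw [inv_smul_smul₀ hNne]
      rw [this]
      exact Submodule.smul_mem _ _ hNspan
    · apply Submodule.span_le.mpr
      rintro _ ⟨t, rfl⟩
      exact hxF t
  -- lifts of y
  choose w hwL hyw using hymem
  set z : Fin r ⊕ Fin s → (Fin n → ℂ) := Sum.elim x w with hz
  have hzL : ∀ i, z i ∈ L := by
    rintro (t | t)
    · exact hxL t
    · exact hwL t
  have hpz : ∀ t, p (w t) = y t := fun t => (hyw t).symm
  -- z spans L over O
  have hzspan : ∀ v ∈ L, ∃ c : Fin r ⊕ Fin s → ℂ,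
      (∀ i, c i ∈ O) ∧ v = ∑ i, c i • z i := by
    intro v hv
    obtain ⟨c2, hc2O, hc2⟩ := hyspan v hv
    set v' : Fin n → ℂ := v - ∑ t, c2 t • w t with hv'
    have hv'L : v' ∈ L := hLsub v hv _ (hLcomb c2 w hc2O hwL)
    have hpv' : p v' = 0 := by
      rw [hv', map_sub, map_sum]
      simp only [_root_.map_smul, hpz]
      rw [hc2, sub_self]
    have hv'F : v' ∈ F := by
      have := hp1 v'
      rwa [hpv', sub_zero] at this
    obtain ⟨c1, hc1O, hc1⟩ := hxspan v' hv'L hv'F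
    refine ⟨Sum.elim c1 c2, ?_, ?_⟩
    · rintro (t | t)
      · exact hc1O t
      · exact hc2O t
    · rw [Fintype.sum_sum_type]
      simp only [Sum.elim_inl, Sum.elim_inr, hz]
      rw [← hc1, hv', sub_add_cancel]
  -- z is linearly independent
  have hzind : LinearIndependent ℂ z := by
    rw [Fintype.linearIndependent_iff]
    intro g hg
    have hps : ∑ t, g (Sum.inr t) • y t = 0 := by
      have := congrArg p hg
      rw [map_sum, map_zero] at this
      rw [Fintype.sum_sum_type] at this
      simpa only [_root_.map_smul, hz, Sum.elim_inl, Sum.elim_inr, hpx, hpz, smul_zero,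
        Finset.sum_const_zero, zero_add] using this
    have hinr : ∀ t, g (Sum.inr t) = 0 :=
      Fintype.linearIndependent_iff.mp hyind _ hps
    have hxs : ∑ t, g (Sum.inl t) • x t = 0 := by
      rw [Fintype.sum_sum_type] at hg
      simpa only [hz, Sum.elim_inl, Sum.elim_inr, hinr, zero_smul,
        Finset.sum_const_zero, add_zero] using hg
    have hinl : ∀ t, g (Sum.inl t) = 0 :=
      Fintype.linearIndependent_iff.mp hxind _ hxs
    rintro (t | t)
    · exact hinl t
    · exact hinr t
  -- z spans everything over ℂ
  have hztop : ⊤ ≤ Submodule.span ℂ (Set.range z) := by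
    have hBtop : Submodule.span ℂ (Set.range B) = ⊤ :=
      hB.span_eq_top_of_card_eq_finrank' (by simp [Module.finrank_fin_fun])
    rw [← hBtop]
    apply Submodule.span_le.mpr
    rintro _ ⟨k, rfl⟩
    obtain ⟨c, _, hc⟩ := hzspan (B k) (hBL k)
    rw [hc]
    exact Submodule.sum_mem _ fun i _ =>
      Submodule.smul_mem _ _ (Submodule.subset_span ⟨i, rfl⟩)
  have hcard : n = r + s := by
    have hbas := Module.finrank_eq_card_basis (Module.Basis.mk hzind hztop)
    rw [Module.finrank_fin_fun] at hbas
    simpa using hbas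
  have e : (Fin r ⊕ Fin s) ≃ Fin n := Fintype.equivOfCardEq (by simp [hcard])
  -- change of basis matrices
  choose Mc hMO hMz using fun i => hLmem (z i) (hzL i)
  choose Nc hNO hNz using fun k => hzspan (B k) (hBL k)
  set z' : Fin n → (Fin n → ℂ) := fun i => z (e.symm i) with hz'def
  set M' : Matrix (Fin n) (Fin n) ℂ := Matrix.of fun i k => Mc (e.symm i) k with hM'
  set N' : Matrix (Fin n) (Fin n) ℂ := Matrix.of fun k i => Nc k (e.symm i) with hN'
  have hz'B : ∀ i, z' i = ∑ k, M' i k • B k := fun i => hMz (e.symm i)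
  have hBz' : ∀ k, B k = ∑ i, N' k i • z' i := by
    intro k
    rw [hNz k, ← Equiv.sum_comp e.symm (fun i => Nc k i • z i)]
    rfl
  have hNM : N' * M' = 1 := by
    have huniq := Fintype.linearIndependent_iff.mp hB
    ext k l
    have hsum : ∑ l, (N' * M') k l • B l = B k := by
      calc ∑ l, (N' * M') k l • B l = ∑ l, ∑ i, (N' k i * M' i l) • B l := by
            refine Finset.sum_congr rfl fun l _ => ?_
            rw [Matrix.mul_apply, Finset.sum_smul]
        _ = ∑ i, N' k i • ∑ l, M' i l • B l := by
            rw [Finset.sum_comm]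
            refine Finset.sum_congr rfl fun i _ => ?_
            rw [Finset.smul_sum]
            exact Finset.sum_congr rfl fun l _ => mul_smul _ _ _
        _ = ∑ i, N' k i • z' i := by
            exact Finset.sum_congr rfl fun i _ => by rw [hz'B i]
        _ = B k := (hBz' k).symm
    have hzero := huniq (fun l => (N' * M') k l - (1 : Matrix (Fin n) (Fin n) ℂ) k l) ?_ l
    · exact sub_eq_zero.mp hzero
    · have hid : ∑ l, (1 : Matrix (Fin n) (Fin n) ℂ) k l • B l = B k := by
        simp [Matrix.one_apply, ite_smul]
      calc ∑ i, ((fun l => (N' * M') k l - (1 : Matrix (Fin n) (Fin n) ℂ) k l) i) • B i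
          = (∑ l, (N' * M') k l • B l) - ∑ l, (1 : Matrix (Fin n) (Fin n) ℂ) k l • B l := by
            rw [← Finset.sum_sub_distrib]
            exact Finset.sum_congr rfl fun l _ => sub_smul _ _ _
        _ = 0 := by rw [hsum, hid, sub_self]
  have hdet1 : M'.det * N'.det = 1 := by
    rw [mul_comm, ← Matrix.det_mul, hNM, Matrix.det_one]
  have hMdetO : M'.det ∈ O := (hOr _).mpr (aux_det_mem Or M' fun i k => (hOr _).mp (hMO (e.symm i) k))
  have hNdetO : N'.det ∈ O := (hOr _).mpr (aux_det_mem Or N' fun k i => (hOr _).mp (hNO k (e.symm i)))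
  have hMK := (hO' _).mp hMdetO
  have hNK := (hO' _).mp hNdetO
  have hunit : star M'.det * M'.det = 1 :=
    aux_unit K hdeg himag hMK.1 hMK.2 hNK.1 hNK.2 hdet1
  -- Gram matrices
  set GB : Matrix (Fin n) (Fin n) ℂ := Matrix.of fun i j => star (B i) ⬝ᵥ h.mulVec (B j) with hGB
  set Gx : Matrix (Fin r) (Fin r) ℂ := Matrix.of fun i j => star (x i) ⬝ᵥ h.mulVec (x j) with hGx
  set Gy : Matrix (Fin s) (Fin s) ℂ := Matrix.of fun i j => star (y i) ⬝ᵥ h.mulVec (y j) with hGy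
  set Gz : Matrix (Fin r ⊕ Fin s) (Fin r ⊕ Fin s) ℂ :=
    Matrix.of fun i j => star (z i) ⬝ᵥ h.mulVec (z j) with hGz
  have hdstar : ∀ (A : Matrix (Fin n) (Fin n) ℂ), (A.map star).det = star A.det := by
    intro A
    have : A.map star = (starRingEnd ℂ).mapMatrix A := by
      ext i j; rfl
    rw [this, ← RingHom.map_det]
    rfl
  -- Gram of z' versus Gram of B
  have hGz'B : (Matrix.of fun i j => star (z' i) ⬝ᵥ h.mulVec (z' j)) = M'.map star * GB * M'ᵀ :=
    aux_gram h M' B z' hz'B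
  have hGz'z : (Matrix.of fun i j => star (z' i) ⬝ᵥ h.mulVec (z' j))
      = Gz.submatrix e.symm e.symm := by
    ext i j; rfl
  have hdetGz : Gz.det = GB.det := by
    have h1 : (Gz.submatrix e.symm e.symm).det = Gz.det :=
      Matrix.det_submatrix_equiv_self e.symm Gz
    rw [← h1, ← hGz'z, hGz'B, Matrix.det_mul, Matrix.det_mul, hdstar, Matrix.det_transpose]
    calc star M'.det * GB.det * M'.det = (star M'.det * M'.det) * GB.det := by ring
      _ = GB.det := by rw [hunit, one_mul]
  -- decompose w over x and y
  have hfF : ∀ t, w t - y t ∈ F := by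
    intro t
    have := hp1 (w t)
    rwa [hpz t] at this
  have hfx : ∀ t, w t - y t ∈ Submodule.span ℂ (Set.range x) := by
    intro t; rw [← hFspan]; exact hfF t
  have hA := fun t => (Submodule.mem_span_range_iff_exists_fun ℂ).mp (hfx t)
  choose A hAx using hA
  -- z in terms of Sum.elim x y
  set z'' : Fin r ⊕ Fin s → (Fin n → ℂ) := Sum.elim x y with hz''
  set Q : Matrix (Fin r ⊕ Fin s) (Fin r ⊕ Fin s) ℂ :=
    Matrix.fromBlocks 1 0 (Matrix.of A) 1 with hQ
  have hzQ : ∀ i, z i = ∑ k, Q i k • z'' k := by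
    rintro (t | t)
    · rw [Fintype.sum_sum_type]
      simp only [hQ, hz'', Matrix.fromBlocks_apply₁₁, Matrix.fromBlocks_apply₁₂,
        Sum.elim_inl, Sum.elim_inr, Matrix.zero_apply, zero_smul, Finset.sum_const_zero, add_zero]
      simp [hz, Matrix.one_apply, ite_smul]
    · rw [Fintype.sum_sum_type]
      simp only [hQ, hz'', Matrix.fromBlocks_apply₂₁, Matrix.fromBlocks_apply₂₂,
        Sum.elim_inl, Sum.elim_inr, Matrix.of_apply]
      have h2 : ∑ k : Fin s, (1 : Matrix (Fin s) (Fin s) ℂ) t k • y k = y t := by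
        simp [Matrix.one_apply, ite_smul]
      rw [h2, hAx t]
      show z (Sum.inr t) = (w t - y t) + y t
      rw [sub_add_cancel]
      rfl
  have hGzQ : Gz = Q.map star * (Matrix.of fun i j => star (z'' i) ⬝ᵥ h.mulVec (z'' j)) * Qᵀ :=
    aux_gram h Q z'' z hzQ
  -- the Gram matrix of (x, y) is block diagonal
  have hGblock : (Matrix.of fun i j => star (z'' i) ⬝ᵥ h.mulVec (z'' j))
      = Matrix.fromBlocks Gx 0 0 Gy := by
    ext i j
    rcases i with i | i <;> rcases j with j | j
    · rfl
    · show star (x i) ⬝ᵥ h.mulVec (y j) = 0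
      rw [hyw j]
      exact hp2 (w j) (x i) (hxF i)
    · show star (y i) ⬝ᵥ h.mulVec (x j) = 0
      have := aux_herm hherm (x j) (y i)
      rw [← this]
      have h0 : star (x j) ⬝ᵥ h.mulVec (y i) = 0 := by
        rw [hyw i]
        exact hp2 (w i) (x j) (hxF j)
      rw [h0, star_zero]
    · rfl
  have hdetQ : Q.det = 1 := by
    rw [hQ, Matrix.det_fromBlocks_zero₁₂, Matrix.det_one, Matrix.det_one, one_mul]
  have hdetQs : (Q.map star).det = 1 := by
    have : Q.map star = (starRingEnd ℂ).mapMatrix Q := by ext i j; rfl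
    rw [this, ← RingHom.map_det, hdetQ, _root_.map_one]
  have hdetGzxy : Gz.det = Gx.det * Gy.det := by
    rw [hGzQ, Matrix.det_mul, Matrix.det_mul, hdetQs, hGblock,
      Matrix.det_fromBlocks_zero₁₂, Matrix.det_transpose, hdetQ]
    ring
  -- final determinant identity over ℂ
  have hfinal : GB.det = Gx.det * Gy.det := by rw [← hdetGz, hdetGzxy]
  -- Gram determinants are real
  have hre : ∀ {ι : Type} [Fintype ι] [DecidableEq ι] (v : ι → Fin n → ℂ),
      ((Matrix.of fun i j => star (v i) ⬝ᵥ h.mulVec (v j)).det).im = 0 := by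
    intro ι _ _ v
    set G := Matrix.of fun i j => star (v i) ⬝ᵥ h.mulVec (v j) with hG
    have hGH : G.IsHermitian := by
      ext i j
      show star (G j i) = G i j
      exact aux_herm hherm (v j) (v i)
    have : star G.det = G.det := by
      rw [← Matrix.det_conjTranspose, hGH.eq]
    have := congrArg Complex.im this
    simp only [Complex.star_def, Complex.conj_im] at this
    linarith
  have hxim : (Gx.det).im = 0 := hre x
  have hyim : (Gy.det).im = 0 := hre y
  show GB.det.re = Gx.det.re * Gy.det.re
  rw [hfinal, Complex.mul_re, hxim, hyim]
  ring
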